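/- In the scalar Gaussian observation model, the posterior distribution of the state given one noisy observation is Gaussian: for (law of X)-almost every x, the conditional distribution of V given X = x (the disintegration kernel of the joint law of (X, V)) is the Gaussian measure with mean (σ² / (σ² + q²)) · x and variance σ² q² / (σ² + q²) (equivalently, variance σ² − σ⁴/(σ² + q²)). -/

import Mathlib

open MeasureTheory ProbabilityTheory Real
open scoped NNReal ENNReal

namespace PosteriorAux

instance isProb_gaussianReal_sub (m v : ℝ) (h : 0 ≤ v) :
    IsProbabilityMeasure (gaussianReal m ⟨v, h⟩) := by
  exact instIsProbabilityMeasureGaussianReal m ⟨v, h⟩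

lemma coe_mk_sub (a : ℝ) (ha : 0 ≤ a) : NNReal.toReal ⟨a, ha⟩ = a := rfl

lemma pdf_factor (σ q : ℝ) (hσ : 0 < σ) (hq : 0 < q) (x y : ℝ) :
    gaussianPDFReal 0 ⟨σ ^ 2, sq_nonneg σ⟩ y *
      gaussianPDFReal 0 ⟨q ^ 2, sq_nonneg q⟩ (x - y)
      = gaussianPDFReal 0 ⟨σ ^ 2 + q ^ 2, by positivity⟩ x *
        gaussianPDFReal (σ ^ 2 / (σ ^ 2 + q ^ 2) * x)
          ⟨σ ^ 2 * q ^ 2 / (σ ^ 2 + q ^ 2), by positivity⟩ y := by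
  have hA : (0:ℝ) < σ ^ 2 + q ^ 2 := by positivity
  have hσ2 : (0:ℝ) < σ ^ 2 := by positivity
  have hq2 : (0:ℝ) < q ^ 2 := by positivity
  simp only [gaussianPDFReal, NNReal.coe_mk, coe_mk_sub, sub_zero]
  have hc : (√(2 * π * σ ^ 2))⁻¹ * (√(2 * π * q ^ 2))⁻¹
      = (√(2 * π * (σ ^ 2 + q ^ 2)))⁻¹
        * (√(2 * π * (σ ^ 2 * q ^ 2 / (σ ^ 2 + q ^ 2))))⁻¹ := by
    rw [← mul_inv, ← mul_inv, ← Real.sqrt_mul (by positivity),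
      ← Real.sqrt_mul (by positivity)]
    congr 1
    field_simp
  have he : rexp (-y ^ 2 / (2 * σ ^ 2)) * rexp (-(x - y) ^ 2 / (2 * q ^ 2))
      = rexp (-x ^ 2 / (2 * (σ ^ 2 + q ^ 2)))
        * rexp (-(y - σ ^ 2 / (σ ^ 2 + q ^ 2) * x) ^ 2
            / (2 * (σ ^ 2 * q ^ 2 / (σ ^ 2 + q ^ 2)))) := by
    rw [← Real.exp_add, ← Real.exp_add]
    congr 1
    field_simp
    ring
  calc (√(2 * π * σ ^ 2))⁻¹ * rexp (-y ^ 2 / (2 * σ ^ 2))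
        * ((√(2 * π * q ^ 2))⁻¹ * rexp (-(x - y) ^ 2 / (2 * q ^ 2)))
      = (√(2 * π * σ ^ 2))⁻¹ * (√(2 * π * q ^ 2))⁻¹
        * (rexp (-y ^ 2 / (2 * σ ^ 2)) * rexp (-(x - y) ^ 2 / (2 * q ^ 2))) := by ring
    _ = (√(2 * π * (σ ^ 2 + q ^ 2)))⁻¹
        * (√(2 * π * (σ ^ 2 * q ^ 2 / (σ ^ 2 + q ^ 2))))⁻¹
        * (rexp (-x ^ 2 / (2 * (σ ^ 2 + q ^ 2)))
          * rexp (-(y - σ ^ 2 / (σ ^ 2 + q ^ 2) * x) ^ 2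
              / (2 * (σ ^ 2 * q ^ 2 / (σ ^ 2 + q ^ 2))))) := by rw [hc, he]
    _ = _ := by ring

lemma measurable_gaussianPDF₂ {α : Type*} [MeasurableSpace α] (v : ℝ≥0)
    {g h : α → ℝ} (hg : Measurable g) (hh : Measurable h) :
    Measurable fun x => gaussianPDF (g x) v (h x) := by
  unfold gaussianPDF gaussianPDFReal
  fun_prop

lemma measurable_gaussianReal_fun {v : ℝ≥0} (hv : v ≠ 0) {f : ℝ → ℝ}
    (hf : Measurable f) : Measurable fun x => gaussianReal (f x) v := by
  refine Measure.measurable_of_measurable_coe _ fun s hs => ?_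
  simp_rw [gaussianReal_apply _ hv s]
  exact Measurable.lintegral_prod_right
    (f := fun x y => gaussianPDF (f x) v y)
    (measurable_gaussianPDF₂ v (hf.comp measurable_fst) measurable_snd)

lemma measurable_gaussianReal_apply {v : ℝ≥0} (hv : v ≠ 0) {f : ℝ → ℝ}
    (hf : Measurable f) {s : Set ℝ} (hs : MeasurableSet s) :
    Measurable fun x => gaussianReal (f x) v s :=
  (Measure.measurable_coe hs).comp (measurable_gaussianReal_fun hv hf)

/-- The Gaussian kernel with mean `a * x` and variance `v`. -/
noncomputable def gaussKernel (a : ℝ) {v : ℝ≥0} (hv : v ≠ 0) : Kernel ℝ ℝ :=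
  ⟨fun x => gaussianReal (a * x) v,
    measurable_gaussianReal_fun hv (measurable_id.const_mul a)⟩

lemma gaussKernel_apply (a : ℝ) {v : ℝ≥0} (hv : v ≠ 0) (x : ℝ) :
    gaussKernel a hv x = gaussianReal (a * x) v := rfl

instance (a : ℝ) {v : ℝ≥0} (hv : v ≠ 0) : IsMarkovKernel (gaussKernel a hv) :=
  ⟨fun _ => by rw [gaussKernel_apply]; infer_instance⟩

instance isMarkov_gaussKernel_sub (a v : ℝ) (h : 0 ≤ v) (hv : (⟨v, h⟩ : ℝ≥0) ≠ 0) :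
    IsMarkovKernel (gaussKernel a hv) :=
  ⟨fun x => isProb_gaussianReal_sub (a * x) v h⟩

end PosteriorAux

open PosteriorAux

/-- in the scalar Gaussian observation model (`V ~ N(0, σ²)` and
`W ~ N(0, q²)` independent, observation `X = V + W`), the posterior distribution of
the state given the observation is Gaussian: letting `ρ` be the joint law of
`(X, V)` on `ℝ × ℝ`, for `ρ.fst`-almost every `x` (i.e. for (law of `X`)-a.e. `x`)
the disintegration kernel of `ρ` at `x` is the Gaussian measure with mean
`(σ² / (σ² + q²)) · x` and variance `σ² q² / (σ² + q²)`. -/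
theorem posterior_of_state_given_observation_gaussian
    {Ω : Type*} [MeasurableSpace Ω] (μ : Measure Ω) [IsProbabilityMeasure μ]
    (σ q : ℝ) (hσ : 0 < σ) (hq : 0 < q)
    (V W : Ω → ℝ) (hV : Measurable V) (hW : Measurable W)
    (hindep : IndepFun V W μ)
    (hVlaw : μ.map V = gaussianReal 0 ⟨σ ^ 2, sq_nonneg σ⟩)
    (hWlaw : μ.map W = gaussianReal 0 ⟨q ^ 2, sq_nonneg q⟩)
    (ρ : Measure (ℝ × ℝ)) [IsFiniteMeasure ρ]
    (hρ : ρ = μ.map fun ω => (V ω + W ω, V ω)) :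
    ∀ᵐ x ∂ρ.fst,
      ρ.condKernel x
        = gaussianReal (σ ^ 2 / (σ ^ 2 + q ^ 2) * x)
            ⟨σ ^ 2 * q ^ 2 / (σ ^ 2 + q ^ 2), by positivity⟩ := by
  have hA : (0:ℝ) < σ ^ 2 + q ^ 2 := by positivity
  have hvσ : (⟨σ ^ 2, sq_nonneg σ⟩ : ℝ≥0) ≠ 0 := by
    intro h; exact absurd (congrArg Subtype.val h) (ne_of_gt (by positivity : (0:ℝ) < σ ^ 2))
  have hvq : (⟨q ^ 2, sq_nonneg q⟩ : ℝ≥0) ≠ 0 := by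
    intro h; exact absurd (congrArg Subtype.val h) (ne_of_gt (by positivity : (0:ℝ) < q ^ 2))
  have hvX : (⟨σ ^ 2 + q ^ 2, hA.le⟩ : ℝ≥0) ≠ 0 := by
    intro h; exact absurd (congrArg Subtype.val h) (ne_of_gt (by positivity : (0:ℝ) < σ ^ 2 + q ^ 2))
  have hvP : (⟨σ ^ 2 * q ^ 2 / (σ ^ 2 + q ^ 2), by positivity⟩ : ℝ≥0) ≠ 0 := by
    intro h
    exact absurd (congrArg Subtype.val h)
      (ne_of_gt (by positivity : (0:ℝ) < σ ^ 2 * q ^ 2 / (σ ^ 2 + q ^ 2)))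
  -- the candidate kernel
  set κ : Kernel ℝ ℝ := gaussKernel (σ ^ 2 / (σ ^ 2 + q ^ 2)) hvP with hκdef
  -- the key rectangle computation
  have key : ∀ s : Set ℝ, MeasurableSet s → ∀ t : Set ℝ, MeasurableSet t →
      ρ (s ×ˢ t) = ∫⁻ x in s, gaussianPDF 0 ⟨σ ^ 2 + q ^ 2, hA.le⟩ x
        * gaussianReal (σ ^ 2 / (σ ^ 2 + q ^ 2) * x)
            ⟨σ ^ 2 * q ^ 2 / (σ ^ 2 + q ^ 2), by positivity⟩ t ∂volume := by
    intro s hs t ht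
    have hVW : Measurable fun ω => (V ω, W ω) := hV.prodMk hW
    have hmap : μ.map (fun ω => (V ω, W ω))
        = (gaussianReal 0 ⟨σ ^ 2, sq_nonneg σ⟩).prod
            (gaussianReal 0 ⟨q ^ 2, sq_nonneg q⟩) := by
      rw [← hVlaw, ← hWlaw]
      exact (indepFun_iff_map_prod_eq_prod_map_map hV.aemeasurable
        hW.aemeasurable).mp hindep
    set E : Set (ℝ × ℝ) := {p : ℝ × ℝ | p.1 + p.2 ∈ s ∧ p.1 ∈ t} with hEdef
    have hE : MeasurableSet E :=
      ((measurable_fst.add measurable_snd) hs).inter (measurable_fst ht)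
    have step1 : ρ (s ×ˢ t)
        = ((gaussianReal 0 ⟨σ ^ 2, sq_nonneg σ⟩).prod
            (gaussianReal 0 ⟨q ^ 2, sq_nonneg q⟩)) E := by
      rw [hρ, Measure.map_apply (show Measurable fun ω => (V ω + W ω, V ω) from (hV.add hW).prodMk hV) (hs.prod ht),
        ← hmap, Measure.map_apply hVW hE]
      congr 1
    rw [step1, Measure.prod_apply hE]
    have step2 : ∀ v : ℝ,
        gaussianReal 0 ⟨q ^ 2, sq_nonneg q⟩ (Prod.mk v ⁻¹' E)
          = t.indicator (fun v => gaussianReal v ⟨q ^ 2, sq_nonneg q⟩ s) v := by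
      intro v
      by_cases hv : v ∈ t
      · have hpre : Prod.mk v ⁻¹' E = (fun w => v + w) ⁻¹' s := by
          ext w; simp [hEdef, hv]
        rw [hpre, Set.indicator_of_mem hv]
        calc gaussianReal 0 ⟨q ^ 2, sq_nonneg q⟩ ((fun w => v + w) ⁻¹' s)
            = (gaussianReal 0 ⟨q ^ 2, sq_nonneg q⟩).map (v + ·) s :=
              (Measure.map_apply (measurable_id.const_add v) hs).symm
          _ = gaussianReal (0 + v) ⟨q ^ 2, sq_nonneg q⟩ s := by
              rw [gaussianReal_map_const_add (μ := 0) (v := ⟨q ^ 2, sq_nonneg q⟩)]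
          _ = gaussianReal v ⟨q ^ 2, sq_nonneg q⟩ s := by rw [zero_add]
      · have hpre : Prod.mk v ⁻¹' E = ∅ := by
          ext w; simp [hEdef, hv]
        rw [hpre, Set.indicator_of_notMem hv]
        simp
    rw [lintegral_congr step2]
    have hmeasind : Measurable
        (t.indicator fun v => gaussianReal v ⟨q ^ 2, sq_nonneg q⟩ s) :=
      (measurable_gaussianReal_apply hvq measurable_id hs).indicator ht
    rw [gaussianReal_of_var_ne_zero 0 hvσ,
      lintegral_withDensity_eq_lintegral_mul _ (measurable_gaussianPDF 0 ⟨σ ^ 2, sq_nonneg σ⟩) hmeasind]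
    have step3 : ∀ v : ℝ,
        (gaussianPDF 0 ⟨σ ^ 2, sq_nonneg σ⟩
          * t.indicator fun v => gaussianReal v ⟨q ^ 2, sq_nonneg q⟩ s) v
        = t.indicator (fun v => gaussianPDF 0 ⟨σ ^ 2, sq_nonneg σ⟩ v
            * gaussianReal v ⟨q ^ 2, sq_nonneg q⟩ s) v := by
      intro v
      by_cases hv : v ∈ t <;> simp [hv]
    rw [lintegral_congr step3, lintegral_indicator ht]
    have step4 : ∀ v : ℝ,
        gaussianPDF 0 ⟨σ ^ 2, sq_nonneg σ⟩ v
            * gaussianReal v ⟨q ^ 2, sq_nonneg q⟩ s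
          = ∫⁻ x in s, gaussianPDF 0 ⟨σ ^ 2, sq_nonneg σ⟩ v
              * gaussianPDF v ⟨q ^ 2, sq_nonneg q⟩ x ∂volume := by
      intro v
      rw [gaussianReal_apply _ hvq s,
        lintegral_const_mul _ (measurable_gaussianPDF v ⟨q ^ 2, sq_nonneg q⟩)]
    rw [lintegral_congr step4]
    rw [lintegral_lintegral_swap
      (((measurable_gaussianPDF 0 _).comp measurable_fst).mul
        (measurable_gaussianPDF₂ _ measurable_fst measurable_snd)).aemeasurable]
    refine lintegral_congr fun x => ?_
    have step5 : ∀ v : ℝ,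
        gaussianPDF 0 ⟨σ ^ 2, sq_nonneg σ⟩ v
            * gaussianPDF v ⟨q ^ 2, sq_nonneg q⟩ x
          = gaussianPDF 0 ⟨σ ^ 2 + q ^ 2, hA.le⟩ x
            * gaussianPDF (σ ^ 2 / (σ ^ 2 + q ^ 2) * x)
                ⟨σ ^ 2 * q ^ 2 / (σ ^ 2 + q ^ 2), by positivity⟩ v := by
      intro v
      unfold gaussianPDF
      rw [← ENNReal.ofReal_mul (gaussianPDFReal_nonneg 0 ⟨σ ^ 2, sq_nonneg σ⟩ v),
        ← ENNReal.ofReal_mul (gaussianPDFReal_nonneg 0 ⟨σ ^ 2 + q ^ 2, hA.le⟩ x)]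
      congr 1
      have h1 : gaussianPDFReal v ⟨q ^ 2, sq_nonneg q⟩ x
          = gaussianPDFReal (0 : ℝ) ⟨q ^ 2, sq_nonneg q⟩ (x - v) := by
        rw [gaussianPDFReal_sub (μ := 0) (v := ⟨q ^ 2, sq_nonneg q⟩), zero_add]
      rw [h1]
      exact pdf_factor σ q hσ hq x v
    rw [lintegral_congr step5,
      lintegral_const_mul _ (measurable_gaussianPDF (σ ^ 2 / (σ ^ 2 + q ^ 2) * x)
        ⟨σ ^ 2 * q ^ 2 / (σ ^ 2 + q ^ 2), by positivity⟩),
      ← gaussianReal_apply _ hvP t]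
  -- identify the first marginal
  have hfst : ρ.fst = gaussianReal 0 ⟨σ ^ 2 + q ^ 2, hA.le⟩ := by
    ext s hs
    rw [Measure.fst_apply hs,
      show Prod.fst ⁻¹' s = s ×ˢ (Set.univ : Set ℝ) from (Set.prod_univ).symm,
      key s hs _ MeasurableSet.univ, gaussianReal_apply _ hvX s]
    simp
  -- the disintegration property
  have hrect : ∀ s : Set ℝ, MeasurableSet s → ∀ t : Set ℝ, MeasurableSet t →
      ρ (s ×ˢ t) = (ρ.fst ⊗ₘ κ) (s ×ˢ t) := by
    intro s hs t ht
    rw [key s hs t ht, hfst, Measure.compProd_apply_prod hs ht,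
      gaussianReal_of_var_ne_zero 0 hvX, restrict_withDensity hs,
      lintegral_withDensity_eq_lintegral_mul _ (measurable_gaussianPDF 0 ⟨σ ^ 2 + q ^ 2, hA.le⟩)
        (κ.measurable_coe ht)]
    refine lintegral_congr fun x => ?_
    simp only [Pi.mul_apply]
    rfl
  have hcomp : ρ = ρ.fst ⊗ₘ κ := by
    refine ext_of_generate_finite _ generateFrom_prod.symm isPiSystem_prod ?_ ?_
    · rintro _ ⟨s, hs, t, ht, rfl⟩
      exact hrect s hs t ht
    · rw [← Set.univ_prod_univ]
      exact hrect _ MeasurableSet.univ _ MeasurableSet.univ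
  filter_upwards [eq_condKernel_of_measure_eq_compProd κ hcomp] with x hx
  rw [← hx, hκdef]
  exact gaussKernel_apply _ _ _
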